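/- Trace-distance bound for pure states: let n be a nonempty finite type and u, v : EuclideanSpace ℂ n with ‖u‖ = 1 and ‖v‖ = 1. Let ρ_u := Matrix.vecMulVec u (star u) and ρ_v := Matrix.vecMulVec v (star v) be the corresponding rank-one density matrices. Then Re(Tr((ρ_u - ρ_v)₊)) ≤ Real.sqrt(1 - ‖⟪u, v⟫‖²), where ⟪·,·⟫ is the inner product on EuclideanSpace ℂ n. -/

import Mathlib

open Matrix
open scoped InnerProductSpace

lemma tv_key {n : Type*} [Fintype n] (x y : n → ℝ) (c : ℝ)
    (hx : ∀ i, 0 ≤ x i) (hy : ∀ i, 0 ≤ y i)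
    (hx1 : ∑ i, x i ^ 2 = 1) (hy1 : ∑ i, y i ^ 2 = 1)
    (hc0 : 0 ≤ c) (hcF : c ≤ ∑ i, x i * y i) :
    ∑ i, max (x i ^ 2 - y i ^ 2) 0 ≤ Real.sqrt (1 - c ^ 2) := by
  set F : ℝ := ∑ i, x i * y i with hF
  have hF0 : 0 ≤ F := Finset.sum_nonneg fun i _ => mul_nonneg (hx i) (hy i)
  -- LHS = (∑ |x²-y²|)/2
  have hmax : ∀ t : ℝ, max t 0 = (|t| + t) / 2 := by
    intro t
    rcases le_total t 0 with h | h
    · rw [max_eq_right h, abs_of_nonpos h]; ring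
    · rw [max_eq_left h, abs_of_nonneg h]; ring
  have hsum0 : ∑ i, (x i ^ 2 - y i ^ 2) = 0 := by
    rw [Finset.sum_sub_distrib, hx1, hy1, sub_self]
  have hL : ∑ i, max (x i ^ 2 - y i ^ 2) 0 = (∑ i, |x i ^ 2 - y i ^ 2|) / 2 := by
    simp only [hmax]
    rw [← Finset.sum_div, Finset.sum_add_distrib, hsum0, add_zero]
  -- Cauchy-Schwarz
  have hCS := Finset.sum_mul_sq_le_sq_mul_sq Finset.univ
      (fun i => |x i - y i|) (fun i => x i + y i)
  have habs : ∀ i, |x i - y i| * (x i + y i) = |x i ^ 2 - y i ^ 2| := by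
    intro i
    rw [← abs_of_nonneg (add_nonneg (hx i) (hy i)) (a := x i + y i), ← abs_mul]
    congr 1; ring
  have hsq : ∀ i, |x i - y i| ^ 2 = x i ^ 2 - 2 * (x i * y i) + y i ^ 2 := by
    intro i; rw [sq_abs]; ring
  have e1 : ∑ i, |x i - y i| ^ 2 = 2 - 2 * F := by
    simp only [hsq]
    rw [Finset.sum_add_distrib, Finset.sum_sub_distrib, hx1, hy1, ← Finset.mul_sum, ← hF]
    ring
  have e2 : ∑ i, (x i + y i) ^ 2 = 2 + 2 * F := by
    have : ∀ i, (x i + y i) ^ 2 = x i ^ 2 + 2 * (x i * y i) + y i ^ 2 := fun i => by ring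
    simp only [this]
    rw [Finset.sum_add_distrib, Finset.sum_add_distrib, hx1, hy1, ← Finset.mul_sum, ← hF]
    ring
  simp only [habs] at hCS
  rw [e1, e2] at hCS
  have hCS' : (∑ i, |x i ^ 2 - y i ^ 2|) ^ 2 ≤ 4 * (1 - F ^ 2) := by
    calc (∑ i, |x i ^ 2 - y i ^ 2|) ^ 2 ≤ (2 - 2 * F) * (2 + 2 * F) := hCS
    _ = 4 * (1 - F ^ 2) := by ring
  have hLnn : 0 ≤ ∑ i, max (x i ^ 2 - y i ^ 2) 0 :=
    Finset.sum_nonneg fun i _ => le_max_right _ _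
  have hFc : c ^ 2 ≤ F ^ 2 := pow_le_pow_left₀ hc0 hcF 2
  have hpos : (0:ℝ) ≤ 1 - c ^ 2 := by
    nlinarith [sq_nonneg (∑ i, |x i ^ 2 - y i ^ 2|)]
  rw [hL]
  rw [Real.le_sqrt (by positivity) hpos]
  nlinarith

open scoped InnerProductSpace

/-- The positive part of a matrix, given by the continuous functional calculus
applied to `fun x => max x 0` (for a Hermitian matrix this replaces each
eigenvalue `x` in the spectral decomposition by `max x 0`). -/
noncomputable def matPosPart {n : Type*} [Fintype n] [DecidableEq n]
    (A : Matrix n n ℂ) : Matrix n n ℂ :=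
  cfc (fun x : ℝ => max x 0) A

section aux

variable {n : Type*} [Fintype n] [DecidableEq n]

lemma vecMulVec_star_isHermitian (w : n → ℂ) :
    (Matrix.vecMulVec w (star w)).IsHermitian := by
  ext i j
  simp [Matrix.conjTranspose_apply, Matrix.vecMulVec_apply, mul_comm]

lemma vecMulVec_mulVec' (w x : n → ℂ) :
    Matrix.vecMulVec w (star w) *ᵥ x = (star w ⬝ᵥ x) • w := by
  ext i
  simp only [Matrix.mulVec, Matrix.vecMulVec_apply, dotProduct, Finset.sum_mul,
    Pi.smul_apply, smul_eq_mul]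
  exact Finset.sum_congr rfl fun j _ => by ring

lemma trace_cfc_re {A : Matrix n n ℂ} (hA : A.IsHermitian) (f : ℝ → ℝ) :
    (cfc f A).trace.re = ∑ i, f (hA.eigenvalues i) := by
  rw [hA.cfc_eq, Matrix.IsHermitian.cfc, Unitary.conjStarAlgAut_apply]
  rw [Matrix.trace_mul_cycle]
  have h1 : (star (hA.eigenvectorUnitary : Matrix n n ℂ)) *
      (hA.eigenvectorUnitary : Matrix n n ℂ) = 1 := by
    simpa using congr_arg (Subtype.val) (unitary.star_mul_self hA.eigenvectorUnitary)
  rw [h1, one_mul, Matrix.trace_diagonal]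
  rw [Complex.re_sum]
  simp [RCLike.ofReal_alg]

end aux

/-- Trace-distance bound for pure states:
`Re (Tr ((|u⟩⟨u| - |v⟩⟨v|)₊)) ≤ √(1 - |⟪u, v⟫|²)`. -/
theorem trace_posPart_pure_states_le
    {n : Type*} [Fintype n] [DecidableEq n] [Nonempty n]
    (u v : EuclideanSpace ℂ n) (hu : ‖u‖ = 1) (hv : ‖v‖ = 1) :
    (matPosPart (Matrix.vecMulVec (u : n → ℂ) (star (u : n → ℂ))
        - Matrix.vecMulVec (v : n → ℂ) (star (v : n → ℂ)))).trace.re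
      ≤ Real.sqrt (1 - ‖⟪u, v⟫_ℂ‖ ^ 2) := by
  set A : Matrix n n ℂ := Matrix.vecMulVec (u : n → ℂ) (star (u : n → ℂ))
      - Matrix.vecMulVec (v : n → ℂ) (star (v : n → ℂ)) with hAdef
  have hA : A.IsHermitian :=
    (vecMulVec_star_isHermitian (u : n → ℂ)).sub (vecMulVec_star_isHermitian (v : n → ℂ))
  set e : n → EuclideanSpace ℂ n := fun i => hA.eigenvectorBasis i with he
  -- eigenvalue formula
  have hnorm_e : ∀ i, star (⇑(e i)) ⬝ᵥ (⇑(e i) : n → ℂ) = 1 := by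
    intro i
    have : ⟪e i, e i⟫_ℂ = 1 := by
      have h2 := hA.eigenvectorBasis.orthonormal.1 i
      have h3 := inner_self_eq_norm_sq_to_K (𝕜 := ℂ) (e i)
      rw [he] at *
      simp only [h2] at h3
      simpa using h3
    rwa [EuclideanSpace.inner_eq_star_dotProduct, dotProduct_comm] at this
  set x : n → ℝ := fun i => ‖⟪u, e i⟫_ℂ‖ with hx
  set y : n → ℝ := fun i => ‖⟪v, e i⟫_ℂ‖ with hy
  -- eigenvalue formula
  have hinner_u : ∀ i, star (u : n → ℂ) ⬝ᵥ (⇑(e i) : n → ℂ) = ⟪u, e i⟫_ℂ := fun i => by rw [EuclideanSpace.inner_eq_star_dotProduct, dotProduct_comm]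
  have hinner_v : ∀ i, star (v : n → ℂ) ⬝ᵥ (⇑(e i) : n → ℂ) = ⟪v, e i⟫_ℂ := fun i => by rw [EuclideanSpace.inner_eq_star_dotProduct, dotProduct_comm]
  have hinner_eu : ∀ i, star (⇑(e i) : n → ℂ) ⬝ᵥ (u : n → ℂ) = ⟪e i, u⟫_ℂ := fun i => by rw [EuclideanSpace.inner_eq_star_dotProduct, dotProduct_comm]
  have hinner_ev : ∀ i, star (⇑(e i) : n → ℂ) ⬝ᵥ (v : n → ℂ) = ⟪e i, v⟫_ℂ := fun i => by rw [EuclideanSpace.inner_eq_star_dotProduct, dotProduct_comm]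
  have heig : ∀ i, hA.eigenvalues i = x i ^ 2 - y i ^ 2 := by
    intro i
    have hmv := hA.mulVec_eigenvectorBasis i
    have h1 : star (⇑(e i) : n → ℂ) ⬝ᵥ (A *ᵥ ⇑(e i)) = (hA.eigenvalues i : ℂ) := by
      rw [hmv]
      rw [dotProduct_smul]
      rw [hnorm_e i]
      simp
    have hAmv : A *ᵥ (⇑(e i) : n → ℂ)
        = (⟪u, e i⟫_ℂ) • (u : n → ℂ) - (⟪v, e i⟫_ℂ) • (v : n → ℂ) := by
      rw [hAdef, Matrix.sub_mulVec, vecMulVec_mulVec', vecMulVec_mulVec',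
        hinner_u, hinner_v]
    rw [hAmv, dotProduct_sub, dotProduct_smul, dotProduct_smul,
      hinner_eu, hinner_ev, smul_eq_mul, smul_eq_mul] at h1
    have h2 : ⟪u, e i⟫_ℂ * ⟪e i, u⟫_ℂ = ((x i ^ 2 : ℝ) : ℂ) := by
      rw [← inner_conj_symm (e i) u]
      rw [RCLike.mul_conj]
      push_cast [hx]
      norm_num
    have h3 : ⟪v, e i⟫_ℂ * ⟪e i, v⟫_ℂ = ((y i ^ 2 : ℝ) : ℂ) := by
      rw [← inner_conj_symm (e i) v]
      rw [RCLike.mul_conj]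
      push_cast [hy]
      norm_num
    rw [h2, h3] at h1
    exact_mod_cast h1.symm
  -- Parseval
  have parseval : ∀ w : EuclideanSpace ℂ n, ‖w‖ = 1 →
      ∑ i, ‖⟪w, e i⟫_ℂ‖ ^ 2 = 1 := by
    intro w hw
    have h := hA.eigenvectorBasis.sum_inner_mul_inner w w
    have h2 : ∀ i, ⟪w, hA.eigenvectorBasis i⟫_ℂ * ⟪hA.eigenvectorBasis i, w⟫_ℂ
        = ((‖⟪w, e i⟫_ℂ‖ ^ 2 : ℝ) : ℂ) := by
      intro i
      rw [← inner_conj_symm (hA.eigenvectorBasis i) w, RCLike.mul_conj]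
      push_cast [he]
      norm_num
    rw [Finset.sum_congr rfl fun i _ => h2 i] at h
    rw [inner_self_eq_norm_sq_to_K, hw] at h
    norm_num at h
    exact_mod_cast h
  have hx1 : ∑ i, x i ^ 2 = 1 := parseval u hu
  have hy1 : ∑ i, y i ^ 2 = 1 := parseval v hv
  -- cross term
  have hcF : ‖⟪u, v⟫_ℂ‖ ≤ ∑ i, x i * y i := by
    have h := hA.eigenvectorBasis.sum_inner_mul_inner u v
    calc ‖⟪u, v⟫_ℂ‖ = ‖∑ i, ⟪u, hA.eigenvectorBasis i⟫_ℂ * ⟪hA.eigenvectorBasis i, v⟫_ℂ‖ := by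
          rw [h]
    _ ≤ ∑ i, ‖⟪u, hA.eigenvectorBasis i⟫_ℂ * ⟪hA.eigenvectorBasis i, v⟫_ℂ‖ :=
          norm_sum_le _ _
    _ = ∑ i, x i * y i := by
          refine Finset.sum_congr rfl fun i _ => ?_
          rw [norm_mul, hx, hy, he]
          congr 1
          rw [← inner_conj_symm]
          exact RCLike.norm_conj _
  -- conclude
  have htr : (matPosPart A).trace.re = ∑ i, max (hA.eigenvalues i) 0 :=
    trace_cfc_re hA _
  rw [htr]
  have : ∑ i, max (hA.eigenvalues i) 0 = ∑ i, max (x i ^ 2 - y i ^ 2) 0 :=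
    Finset.sum_congr rfl fun i _ => by rw [heig i]
  rw [this]
  exact tv_key x y _ (fun i => norm_nonneg _) (fun i => norm_nonneg _) hx1 hy1
    (norm_nonneg _) hcF
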